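/- arXiv:1309.2025 — 3 statements merged into one kernel-verified Lean document; each statement's English description precedes it below -/
import Mathlib

section
/- Let K be a number field of degree n. The set {x ∈ ℤ + nO_K : Tr_{K/ℚ}(x) = 0} is a free ℤ-module of rank n − 1. -/
open NumberField

/-- For a number field `K` of degree `n`, the set `{x ∈ ℤ + n𝓞_K : Tr_{K/ℚ}(x) = 0}`
is a free `ℤ`-module of rank `n - 1`. -/
theorem trace_zero_submodule_free_rank (K : Type*) [Field K] [NumberField K]
    (n : ℕ) (hn : n = Module.finrank ℚ K)
    (A : Submodule ℤ K)
    (hA : A = Submodule.span ℤ (insert (1 : K) {x : K | ∃ y : 𝓞 K, x = (n : K) * (y : K)}))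
    (M : Submodule ℤ K)
    (hM : M = A ⊓ (LinearMap.ker ((Algebra.trace ℚ K).restrictScalars ℤ))) :
    Module.Free ℤ M ∧ Module.finrank ℤ M = n - 1 := by
  have hn0 : 0 < n := hn ▸ Module.finrank_pos
  -- the linear map sending y ∈ 𝓞 K to n * y in K
  set f : 𝓞 K →ₗ[ℤ] K := (n : ℤ) • ((Algebra.linearMap (𝓞 K) K).restrictScalars ℤ) with hf
  have hfval : ∀ y : 𝓞 K, f y = (n : K) * (y : K) := by
    intro y
    simp [hf, zsmul_eq_mul]
  have hS : {x : K | ∃ y : 𝓞 K, x = (n : K) * (y : K)} = Set.range f := by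
    ext x
    simp only [Set.mem_setOf_eq, Set.mem_range]
    constructor
    · rintro ⟨y, rfl⟩; exact ⟨y, hfval y⟩
    · rintro ⟨y, rfl⟩; exact ⟨y, hfval y⟩
  -- A is finitely generated
  have hAfg : A.FG := by
    rw [hA, Submodule.span_insert, hS]
    refine Submodule.FG.sup (Submodule.fg_span_singleton _) ?_
    rw [← LinearMap.coe_range, Submodule.span_eq]
    rw [LinearMap.range_eq_map]
    exact Submodule.FG.map f (Module.Finite.fg_top (R := ℤ) (M := 𝓞 K))
  have hMA : M ≤ A := hM ▸ inf_le_left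
  -- M is finitely generated
  have hMfg : M.FG := by
    haveI : Module.Finite ℤ A := Module.Finite.iff_fg.mpr hAfg
    haveI : IsNoetherian ℤ A := inferInstance
    have : M = Submodule.map A.subtype (Submodule.comap A.subtype M) := by
      rw [Submodule.map_comap_subtype, inf_eq_right.mpr hMA]
    rw [this]
    exact Submodule.FG.map _ (IsNoetherian.noetherian _)
  haveI : Module.Finite ℤ M := Module.Finite.iff_fg.mpr hMfg
  haveI hfree : Module.Free ℤ M := Module.free_of_finite_type_torsion_free'
  refine ⟨hfree, ?_⟩
  -- basis of M
  set ι := Module.Free.ChooseBasisIndex ℤ M with hι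
  set b : Module.Basis ι ℤ M := Module.Free.chooseBasis ℤ M with hb
  set v : ι → K := fun i => ((b i : M) : K) with hv
  have hvind : LinearIndependent ℤ v :=
    b.linearIndependent.map' M.subtype (Submodule.ker_subtype M)
  have hvindQ : LinearIndependent ℚ v := LinearIndependent.iff_fractionRing ℤ ℚ |>.mp hvind
  -- span of v over ℤ is M
  have hspanZ : Submodule.span ℤ (Set.range v) = M := by
    have : Set.range v = M.subtype '' (Set.range b) := by
      ext x; simp [hv, Set.range_comp]
    rw [this, ← Submodule.map_span, b.span_eq, Submodule.map_top, Submodule.range_subtype]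
  -- span of M over ℚ equals span of range v over ℚ
  have hspanQ : Submodule.span ℚ (Set.range v) = Submodule.span ℚ (M : Set K) := by
    apply le_antisymm
    · apply Submodule.span_le.mpr
      intro x hx
      rcases hx with ⟨i, rfl⟩
      exact Submodule.subset_span (b i).2
    · apply Submodule.span_le.mpr
      intro x hx
      rw [← hspanZ] at hx
      exact Submodule.span_le_restrictScalars ℤ ℚ (Set.range v) hx
  -- span of M over ℚ is the kernel of the trace
  have hker : Submodule.span ℚ (M : Set K) = LinearMap.ker (Algebra.trace ℚ K) := by
    apply le_antisymm
    · apply Submodule.span_le.mpr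
      intro x hx
      have : x ∈ LinearMap.ker ((Algebra.trace ℚ K).restrictScalars ℤ) := (hM ▸ hx).2
      simpa using this
    · intro x hx
      have hx0 : Algebra.trace ℚ K x = 0 := hx
      have halg : IsAlgebraic ℤ x :=
        (IsFractionRing.isAlgebraic_iff ℤ ℚ K).mpr (Algebra.IsAlgebraic.isAlgebraic x)
      obtain ⟨y, d, hd0, hdy⟩ : ∃ (y : integralClosure ℤ K) (d : ℤ), d ≠ 0 ∧
          algebraMap ℤ K d * x = (y : K) := by
        obtain ⟨d, hd0, hint⟩ := halg.exists_integral_multiple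
        exact ⟨⟨d • x, hint⟩, d, hd0, (Algebra.smul_def d x).symm⟩
      set q : ℚ := (n : ℚ) * (d : ℚ) with hq
      have hq0 : q ≠ 0 := mul_ne_zero (Nat.cast_ne_zero.mpr hn0.ne') (Int.cast_ne_zero.mpr hd0)
      have hz : q • x ∈ M := by
        rw [hM]
        constructor
        · rw [hA]
          apply Submodule.subset_span
          right
          refine ⟨⟨y, y.2⟩, ?_⟩
          have hdy' : (d : K) * x = (y : K) := by
            have : algebraMap ℤ K d * x = (y : K) := hdy
            simpa [eq_intCast] using this
          show q • x = (n : K) * (y : K)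
          rw [← hdy', hq, Algebra.smul_def]
          simp only [map_mul, map_natCast, map_intCast]
          ring
        · show Algebra.trace ℚ K (q • x) = 0
          rw [map_smul, hx0, smul_zero]
      have : x = q⁻¹ • (q • x) := by
        rw [smul_smul, inv_mul_cancel₀ hq0, one_smul]
      rw [this]
      exact Submodule.smul_mem _ _ (Submodule.subset_span hz)
  -- the kernel of the trace has dimension n - 1
  have hsurj : LinearMap.range (Algebra.trace ℚ K) = ⊤ := by
    rw [LinearMap.range_eq_top]
    intro q
    refine ⟨(q / n) • 1, ?_⟩
    rw [map_smul]
    have h1 : Algebra.trace ℚ K 1 = (n : ℚ) := by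
      have := Algebra.trace_algebraMap (R := ℚ) (S := K) 1
      rw [map_one] at this
      rw [this, ← hn]
      simp
    rw [h1, smul_eq_mul]
    field_simp
  have hkerdim : Module.finrank ℚ (LinearMap.ker (Algebra.trace ℚ K)) = n - 1 := by
    have hrk := LinearMap.finrank_range_add_finrank_ker (Algebra.trace ℚ K)
    rw [hsurj, finrank_top] at hrk
    have : Module.finrank ℚ ℚ = 1 := Module.finrank_self ℚ
    rw [this, ← hn] at hrk
    omega
  -- conclude
  have hcard : Module.finrank ℤ M = Fintype.card ι :=
    Module.finrank_eq_card_chooseBasisIndex ℤ M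
  have hfr : Module.finrank ℚ (Submodule.span ℚ (Set.range v)) = Fintype.card ι :=
    finrank_span_eq_card hvindQ
  rw [hcard, ← hfr, hspanQ, hker, hkerdim]
end

section
/- Let K be a number field of degree n and q the Minkowski quadratic form on K. The restriction of q to the trace-zero submodule {x ∈ ℤ + nO_K : Tr(x) = 0} equals n² times the restriction of q to the orthogonal projection of O_K onto the hyperplane orthogonal to 1; in particular the two definitions of the shape of O_K agree up to scaling by ℝ^×. -/
open NumberField

/-- Let `q` be the Minkowski form `q(x) = Σσᵢ(x)² + 2Σ|τⱼ(x)|² = Σ_{φ:K→ℂ} |φ(x)|²`.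
For `x ∈ 𝓞 K`, the value of `q` at the trace-zero element `n·x − Tr(x)·1 ∈ ℤ + n𝓞_K`
equals `n²` times the value of `q` at the orthogonal projection `x − (Tr(x)/n)·1` of `x`
onto the hyperplane orthogonal to `1`; in particular the two definitions of the shape of
`𝓞 K` agree up to scaling by `ℝˣ`. -/
theorem trace_zero_shape_eq_sq_scaling_of_projection (K : Type*) [Field K] [NumberField K]
    (n : ℕ) (hn : n = Module.finrank ℚ K)
    (q : K → ℝ) (hq : ∀ x : K, q x = ∑ᶠ φ : K →+* ℂ, ‖φ x‖ ^ 2)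
    (x : 𝓞 K) :
    q ((n : K) * (x : K) - algebraMap ℚ K (Algebra.trace ℚ K (x : K))) =
      (n : ℝ) ^ 2 * q ((x : K) - algebraMap ℚ K (Algebra.trace ℚ K (x : K) / n)) := by
  have hn0 : n ≠ 0 := by
    rw [hn]
    exact Module.finrank_pos.ne'
  have hnK : (n : K) ≠ 0 := Nat.cast_ne_zero.mpr hn0
  set t : ℚ := Algebra.trace ℚ K (x : K)
  have harg : (n : K) * (x : K) - algebraMap ℚ K t =
      (n : K) * ((x : K) - algebraMap ℚ K (t / n)) := by
    rw [mul_sub, map_div₀, map_natCast, mul_div_cancel₀ _ hnK]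
  rw [harg, hq, hq, finsum_eq_sum_of_fintype, finsum_eq_sum_of_fintype,
    Finset.mul_sum]
  refine Finset.sum_congr rfl fun φ _ => ?_
  rw [map_mul, norm_mul, map_natCast, Complex.norm_natCast, mul_pow]
end

section
/- If K is a number field admitting a nontrivial field automorphism σ of order 2, then the lattice O_K with the Minkowski quadratic form q admits a nontrivial isometry of order 2 fixing 1; consequently the shape of O_K admits a nontrivial automorphism of order 2 in GL_{n−1}(ℤ). -/
open NumberField

/-- If a number field `K` admits a nontrivial field automorphism `σ` of order 2, then the
lattice `𝓞 K` with the Minkowski form `q(x) = Σ_{φ:K→ℂ} |φ(x)|²` admits a nontrivial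
isometry of order 2 fixing `1`. -/
theorem exists_order_two_isometry_of_ring_of_integers (K : Type*) [Field K] [NumberField K]
    (σ : K ≃+* K) (hσ : σ ≠ RingEquiv.refl K) (hσ2 : σ.trans σ = RingEquiv.refl K)
    (q : K → ℝ) (hq : ∀ x : K, q x = ∑ᶠ φ : K →+* ℂ, ‖φ x‖ ^ 2) :
    ∃ T : 𝓞 K ≃ₗ[ℤ] 𝓞 K,
      T ≠ LinearEquiv.refl ℤ (𝓞 K) ∧
      T.trans T = LinearEquiv.refl ℤ (𝓞 K) ∧
      T 1 = 1 ∧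
      ∀ x : 𝓞 K, q ((T x : K)) = q (x : K) := by
  set e : 𝓞 K ≃+* 𝓞 K := RingOfIntegers.mapRingEquiv σ with he
  have hcoe : ∀ x : 𝓞 K, ((e x : K)) = σ (x : K) := fun x => rfl
  refine ⟨e.toAddEquiv.toIntLinearEquiv, ?_, ?_, ?_, ?_⟩
  · intro h
    apply hσ
    ext x
    obtain ⟨a, b, hb, rfl⟩ := IsFractionRing.div_surjective (A := 𝓞 K) x
    have hfix : ∀ y : 𝓞 K, σ (y : K) = (y : K) := fun y => by
      have := DFunLike.congr_fun h y
      rw [← hcoe y]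
      exact_mod_cast this
    simp [map_div₀, hfix a, hfix b]
  · refine LinearEquiv.ext fun x => ?_
    have h2 : σ (σ (x : K)) = (x : K) := DFunLike.congr_fun hσ2 (x : K)
    ext
    show ((e (e x) : K)) = (x : K)
    rw [hcoe, hcoe]
    exact h2
  · ext
    simpa [hcoe] using map_one σ
  · intro x
    show q ((e x : K)) = q (x : K)
    rw [hq, hq]
    set E : (K →+* ℂ) ≃ (K →+* ℂ) :=
      { toFun := fun φ => φ.comp (σ : K →+* K)
        invFun := fun φ => φ.comp (σ : K →+* K)
        left_inv := fun φ => by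
          ext y
          simpa using congrArg φ (DFunLike.congr_fun hσ2 y)
        right_inv := fun φ => by
          ext y
          simpa using congrArg φ (DFunLike.congr_fun hσ2 y) }
    have hE : ∀ φ : K →+* ℂ, ‖φ ((e x : K))‖ ^ 2
        = ‖(E φ) (x : K)‖ ^ 2 := fun φ => by
      simp [E, hcoe]
    rw [finsum_congr hE]
    exact finsum_comp_equiv (f := fun φ : K →+* ℂ => ‖φ (x : K)‖ ^ 2) E
end
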